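/- In the dynamic programming sweep for interval coverage, the following invariant is preserved: just after processing point p*_i, for every segment s* currently containing the sweep point, cost(s*) = w(s*) + δ*_{f_{s*}}, and δ*_j has been correctly computed for all j ≤ i. In particular, correctness of the sweep follows by induction: δ*_i = min_{s* ∋ p*_i} cost(s*) equals the true optimum for covering p*_1,…,p*_i. -/
import Mathlib


open scoped Classical ENNReal

/-- The minimum total weight of a subset of the segments `Set.Icc (a s) (b s)`,
`s ∈ S`, whose union covers the points `p 1, …, p i` (`∞` if infeasible). -/
noncomputable def deltaStar {ι : Type*} (S : Finset ι) (a b : ι → ℝ) (w : ι → ℝ)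
    (p : ℕ → ℝ) (i : ℕ) : ℝ≥0∞ :=
  ⨅ (S' : Finset ι) (_ : S' ⊆ S ∧
      ∀ k, 1 ≤ k → k ≤ i → ∃ s ∈ S', p k ∈ Set.Icc (a s) (b s)),
    ∑ s ∈ S', ENNReal.ofReal (w s)

/-- Correctness of the dynamic-programming sweep for weighted interval
coverage: with `p*_0` strictly left of every segment's left endpoint and every
point covered by at least one segment, for each `1 ≤ i ≤ n`,
`δ*_i = min_{s* ∋ p*_i} (w(s*) + δ*_{f_{s*}})` where `f_{s*}` is the largest
index `j` with `p*_j` strictly left of the left endpoint of `s*`; i.e. the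
cost maintained by the sweep, `cost(s*) = w(s*) + δ*_{f_{s*}}`, minimized over
the segments containing `p*_i`, equals the true optimum for covering
`p*_1, …, p*_i`. -/
theorem sweep_correct {ι : Type*} (S : Finset ι) (a b : ι → ℝ)
    (w : ι → ℝ) (p : ℕ → ℝ) (n : ℕ)
    (hmono : StrictMonoOn p (Set.Icc 0 n))
    (hab : ∀ s ∈ S, a s ≤ b s)
    (hw : ∀ s ∈ S, 0 < w s)
    (hp0 : ∀ s ∈ S, p 0 < a s)
    (hcov : ∀ i, 1 ≤ i → i ≤ n → ∃ s ∈ S, p i ∈ Set.Icc (a s) (b s))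
    (i : ℕ) (h1 : 1 ≤ i) (hn : i ≤ n) :
    deltaStar S a b w p i =
      ⨅ (s : ι) (_ : s ∈ S ∧ p i ∈ Set.Icc (a s) (b s)),
        (ENNReal.ofReal (w s) +
          deltaStar S a b w p (Nat.findGreatest (fun j => p j < a s) n)) := by
  classical
  have hpmono : ∀ j k : ℕ, j ≤ k → k ≤ n → p j ≤ p k := fun j k hjk hkn =>
    hmono.monotoneOn ⟨Nat.zero_le _, hjk.trans hkn⟩ ⟨Nat.zero_le _, hkn⟩ hjk
  -- f s < i whenever a s ≤ p i
  have key : ∀ s : ι, a s ≤ p i →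
      Nat.findGreatest (fun j => p j < a s) n < i := by
    intro s has
    by_contra h
    push_neg at h
    have h0 : Nat.findGreatest (fun j => p j < a s) n ≠ 0 := by
      omega
    have hP : p (Nat.findGreatest (fun j => p j < a s) n) < a s :=
      Nat.findGreatest_of_ne_zero rfl h0
    have hle : p i ≤ p (Nat.findGreatest (fun j => p j < a s) n) :=
      hpmono i _ h (Nat.findGreatest_le n)
    linarith
  apply le_antisymm
  · refine le_iInf fun s => le_iInf fun hs => ?_
    obtain ⟨hsS, hpa, hpb⟩ := hs
    set m := Nat.findGreatest (fun j => p j < a s) n with hm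
    have hrhs : ENNReal.ofReal (w s) + deltaStar S a b w p m =
        ⨅ (S' : Finset ι) (_ : S' ⊆ S ∧
            ∀ k, 1 ≤ k → k ≤ m → ∃ t ∈ S', p k ∈ Set.Icc (a t) (b t)),
          (ENNReal.ofReal (w s) + ∑ t ∈ S', ENNReal.ofReal (w t)) := by
      rw [deltaStar, ENNReal.add_iInf]
      exact iInf_congr fun S' => by rw [ENNReal.add_iInf]
    rw [hrhs]
    refine le_iInf fun S' => le_iInf fun hS' => ?_
    rw [deltaStar]
    have hcover : ∀ k, 1 ≤ k → k ≤ i → ∃ t ∈ insert s S', p k ∈ Set.Icc (a t) (b t) := by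
      intro k hk1 hki
      by_cases hkm : k ≤ m
      · obtain ⟨t, ht, hpt⟩ := hS'.2 k hk1 hkm
        exact ⟨t, Finset.mem_insert_of_mem ht, hpt⟩
      · push_neg at hkm
        refine ⟨s, Finset.mem_insert_self _ _, ?_, ?_⟩
        · have := Nat.findGreatest_is_greatest (P := fun j => p j < a s)
            hkm (hki.trans hn)
          simpa using this
        · exact (hpmono k i hki hn).trans hpb
    refine le_trans
      (iInf₂_le (insert s S') ⟨Finset.insert_subset hsS hS'.1, hcover⟩) ?_
    by_cases hss : s ∈ S'
    · rw [Finset.insert_eq_self.2 hss]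
      exact self_le_add_left _ _
    · rw [Finset.sum_insert hss]
  · rw [deltaStar]
    refine le_iInf fun S' => le_iInf fun hS' => ?_
    obtain ⟨hS'S, hcov'⟩ := hS'
    obtain ⟨s, hsS', hps⟩ := hcov' i h1 le_rfl
    refine le_trans (iInf₂_le s ⟨hS'S hsS', hps⟩) ?_
    set m := Nat.findGreatest (fun j => p j < a s) n with hm
    have hmlt : m < i := key s hps.1
    rw [← Finset.add_sum_erase _ _ hsS']
    gcongr
    rw [deltaStar]
    refine iInf₂_le (S'.erase s) ⟨(Finset.erase_subset _ _).trans hS'S, ?_⟩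
    intro k hk1 hkm
    obtain ⟨t, ht, hpt⟩ := hcov' k hk1 (le_of_lt (hkm.trans_lt hmlt))
    refine ⟨t, Finset.mem_erase.2 ⟨?_, ht⟩, hpt⟩
    rintro rfl
    have hm0 : m ≠ 0 := by omega
    have hP : p m < a t := Nat.findGreatest_of_ne_zero rfl hm0
    have : p k ≤ p m := hpmono k m hkm (Nat.findGreatest_le n)
    linarith [hpt.1]
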